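/- Let {R,F} be a compatible pair of R-matrices on V⊗V, V = ℂ^N, let A be an associative unital ℂ-algebra, let η ∈ ℂ∖{0}, and let L, M ∈ Mat_N(A) satisfy the operator-function permutation relation R₁L₁R₁M₁ = η·M₁L_{2̄} in Mat_{N²}(A), where L_{2̄} = F₁L₁F₁⁻¹. Then for every k ≥ 1 the shifted relation holds: R_k L_{k̄} R_k M_{k̄} = η·M_{k̄} L_{k+1‾} in Mat_{N^{k+1}}(A), where the copies are defined by X_{1̄} = X₁ and X_{k+1‾} = F_k X_{k̄} F_k⁻¹. -/

import Mathlib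

open Matrix BigOperators

/-- `X₁ = X ⊗ id` acting on the factors 1,2 of `(ℂ^N)^{⊗3}`. -/
noncomputable def up12 {N : ℕ} (X : Matrix (Fin N × Fin N) (Fin N × Fin N) ℂ) :
    Matrix (Fin N × Fin N × Fin N) (Fin N × Fin N × Fin N) ℂ :=
  Matrix.of fun p q => X (p.1, p.2.1) (q.1, q.2.1) * (if p.2.2 = q.2.2 then 1 else 0)

/-- `X₂ = id ⊗ X` acting on the factors 2,3 of `(ℂ^N)^{⊗3}`. -/
noncomputable def up23 {N : ℕ} (X : Matrix (Fin N × Fin N) (Fin N × Fin N) ℂ) :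
    Matrix (Fin N × Fin N × Fin N) (Fin N × Fin N × Fin N) ℂ :=
  Matrix.of fun p q => (if p.1 = q.1 then 1 else 0) * X (p.2.1, p.2.2) (q.2.1, q.2.2)

/-- `X₁ = X ⊗ I_N` on two tensor factors, for a matrix over an algebra `A`. -/
def lift1 {N : ℕ} {A : Type} [Ring A] (X : Matrix (Fin N) (Fin N) A) :
    Matrix (Fin N × Fin N) (Fin N × Fin N) A :=
  Matrix.of fun p q => X p.1 q.1 * (if p.2 = q.2 then 1 else 0)

/-- A matrix `X ∈ Mat_N(A)` placed in the (0-indexed) tensor factor `p`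
of `V^{⊗k}`, acting as the identity elsewhere. -/
def liftV {N : ℕ} {A : Type} [Ring A] (k : ℕ) (X : Matrix (Fin N) (Fin N) A)
    (p : ℕ) : Matrix (Fin k → Fin N) (Fin k → Fin N) A :=
  Matrix.of fun v w =>
    if h : p < k then
      X (v ⟨p, h⟩) (w ⟨p, h⟩) *
        (if ∀ j : Fin k, (j : ℕ) ≠ p → v j = w j then 1 else 0)
    else (if v = w then 1 else 0)

/-- A matrix `X ∈ Mat_{N²}(A)` placed in the (0-indexed) tensor factors
`p, p+1` of `V^{⊗k}`; this is the operator `X_{p+1}` in 1-indexed notation. -/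
def lift2 {N : ℕ} {A : Type} [Ring A] (k : ℕ)
    (X : Matrix (Fin N × Fin N) (Fin N × Fin N) A) (p : ℕ) :
    Matrix (Fin k → Fin N) (Fin k → Fin N) A :=
  Matrix.of fun v w =>
    if h : p + 1 < k then
      X (v ⟨p, Nat.lt_of_succ_lt h⟩, v ⟨p + 1, h⟩)
          (w ⟨p, Nat.lt_of_succ_lt h⟩, w ⟨p + 1, h⟩) *
        (if ∀ j : Fin k, (j : ℕ) ≠ p → (j : ℕ) ≠ p + 1 → v j = w j then 1 else 0)
    else (if v = w then 1 else 0)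

/-- The `F`-copies of a matrix `X` in `Mat_{N^k}(A)`:
`X_{1̄} = X₁` and `X_{n+2‾} = F_{n+1} X_{n+1‾} F_{n+1}⁻¹` (0-indexed:
`copies k FA FinvA X n` is the copy `X_{n+1‾}`). -/
def copies {N : ℕ} {A : Type} [Ring A] (k : ℕ)
    (FA FinvA : Matrix (Fin N × Fin N) (Fin N × Fin N) A)
    (X : Matrix (Fin N) (Fin N) A) :
    ℕ → Matrix (Fin k → Fin N) (Fin k → Fin N) A
  | 0 => liftV k X 0
  | n + 1 => lift2 k FA n * copies k FA FinvA X n * lift2 k FinvA n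


section Emb
variable {N : ℕ} {A : Type*} [Ring A]
variable {I J K : Type*} [Fintype I] [Fintype J] [Fintype K]
  [DecidableEq I] [DecidableEq J] [DecidableEq K]

/-- place a matrix on the coordinates in the range of `ι`. -/
def emb (ι : I ↪ J) (X : Matrix (I → Fin N) (I → Fin N) A) :
    Matrix (J → Fin N) (J → Fin N) A :=
  Matrix.of fun v w =>
    X (v ∘ ι) (w ∘ ι) * (if ∀ j, (∀ i, ι i ≠ j) → v j = w j then 1 else 0)

noncomputable def splitE (ι : I ↪ J) : (J → Fin N) ≃ (I → Fin N) × ({j : J // ∀ i, ι i ≠ j} → Fin N) where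
  toFun u := (u ∘ ι, fun j => u j.1)
  invFun ts := fun j =>
    if h : ∃ i, ι i = j then ts.1 h.choose else ts.2 ⟨j, fun i hi => h ⟨i, hi⟩⟩
  left_inv u := by
    funext j
    by_cases h : ∃ i, ι i = j
    · simp only [dif_pos h, Function.comp_apply, h.choose_spec]
    · simp only [dif_neg h]
  right_inv ts := by
    ext i
    · have h : ∃ i', ι i' = ι i := ⟨i, rfl⟩
      simp only [Function.comp_apply, dif_pos h]
      rw [ι.injective h.choose_spec]
    · rcases i with ⟨j, hj⟩
      have h : ¬ ∃ i, ι i = j := fun ⟨i, hi⟩ => hj i hi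
      simp only [dif_neg h]

lemma splitE_symm_comp (ι : I ↪ J) (t : I → Fin N) (s : {j : J // ∀ i, ι i ≠ j} → Fin N) :
    ((splitE ι).symm (t, s)) ∘ ι = t := by
  funext i
  have h : ∃ i', ι i' = ι i := ⟨i, rfl⟩
  simp only [splitE, Equiv.coe_fn_symm_mk, Function.comp_apply, dif_pos h]
  congr 1
  exact ι.injective h.choose_spec

lemma splitE_symm_notin (ι : I ↪ J) (t : I → Fin N) (s : {j : J // ∀ i, ι i ≠ j} → Fin N)
    (j : J) (hj : ∀ i, ι i ≠ j) : ((splitE ι).symm (t, s)) j = s ⟨j, hj⟩ := by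
  have h : ¬ ∃ i, ι i = j := fun ⟨i, hi⟩ => hj i hi
  simp only [splitE, Equiv.coe_fn_symm_mk, dif_neg h]

lemma emb_cond_symm (ι : I ↪ J) (v : J → Fin N) (t : I → Fin N)
    (s : {j : J // ∀ i, ι i ≠ j} → Fin N) :
    (∀ j, (∀ i, ι i ≠ j) → v j = ((splitE ι).symm (t, s)) j) ↔
      ((fun j : {j : J // ∀ i, ι i ≠ j} => v j.1) = s) := by
  constructor
  · intro h
    funext j
    rw [← splitE_symm_notin ι t s j.1 j.2]
    exact h j.1 j.2
  · intro h j hj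
    rw [splitE_symm_notin ι t s j hj, ← h]

lemma emb_cond_symm' (ι : I ↪ J) (w : J → Fin N) (t : I → Fin N)
    (s : {j : J // ∀ i, ι i ≠ j} → Fin N) :
    (∀ j, (∀ i, ι i ≠ j) → ((splitE ι).symm (t, s)) j = w j) ↔
      ((fun j : {j : J // ∀ i, ι i ≠ j} => w j.1) = s) := by
  constructor
  · intro h
    funext j
    rw [← splitE_symm_notin ι t s j.1 j.2]
    exact (h j.1 j.2).symm
  · intro h j hj
    rw [splitE_symm_notin ι t s j hj, ← h]

lemma emb_mul (ι : I ↪ J) (X Y : Matrix (I → Fin N) (I → Fin N) A) :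
    emb ι X * emb ι Y = emb (N := N) ι (X * Y) := by
  ext v w
  rw [Matrix.mul_apply]
  rw [← Equiv.sum_comp (splitE (N := N) ι).symm
    (fun u => emb ι X v u * emb ι Y u w)]
  rw [Fintype.sum_prod_type]
  simp only [emb, Matrix.of_apply, splitE_symm_comp, emb_cond_symm, emb_cond_symm']
  have : ∀ t : I → Fin N,
      (∑ s : {j : J // ∀ i, ι i ≠ j} → Fin N,
        X (v ∘ ι) t * (if (fun j : {j : J // ∀ i, ι i ≠ j} => v j.1) = s then 1 else 0) *
          (Y t (w ∘ ι) * (if (fun j : {j : J // ∀ i, ι i ≠ j} => w j.1) = s then 1 else 0)))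
      = X (v ∘ ι) t * Y t (w ∘ ι) *
          (if (∀ j, (∀ i, ι i ≠ j) → v j = w j) then 1 else 0) := by
    intro t
    have hc : (∀ j, (∀ i, ι i ≠ j) → v j = w j) ↔
        ((fun j : {j : J // ∀ i, ι i ≠ j} => v j.1) =
          (fun j : {j : J // ∀ i, ι i ≠ j} => w j.1)) := by
      constructor
      · intro h; funext j; exact h j.1 j.2
      · intro h j hj; exact congrFun h ⟨j, hj⟩
    rw [Finset.sum_eq_single ((fun j : {j : J // ∀ i, ι i ≠ j} => v j.1))]
    · by_cases h : (∀ j, (∀ i, ι i ≠ j) → v j = w j)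
      · rw [if_pos h, if_pos rfl, if_pos (hc.1 h).symm, mul_one, mul_one, mul_one]
      · rw [if_neg h, if_pos rfl, if_neg (fun hh => h (hc.2 hh.symm))]
        simp
    · intro s _ hs
      rw [if_neg (Ne.symm hs)]
      simp
    · intro h; exact absurd (Finset.mem_univ _) h
  simp only [this]
  rw [Matrix.mul_apply, Finset.sum_mul]

lemma emb_one (ι : I ↪ J) : emb ι (1 : Matrix (I → Fin N) (I → Fin N) A) = 1 := by
  ext v w
  simp only [emb, Matrix.of_apply, Matrix.one_apply]
  by_cases h : v = w
  · subst h; simp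
  · have : ¬ (v ∘ ι = w ∘ ι ∧ ∀ j, (∀ i, ι i ≠ j) → v j = w j) := by
      intro ⟨h1, h2⟩
      apply h
      funext j
      by_cases hj : ∃ i, ι i = j
      · obtain ⟨i, rfl⟩ := hj; exact congrFun h1 i
      · exact h2 j (fun i hi => hj ⟨i, hi⟩)
    rw [if_neg h]
    by_cases h1 : v ∘ ι = w ∘ ι
    · rw [if_pos h1, if_neg (fun h2 => this ⟨h1, h2⟩), one_mul]
    · rw [if_neg h1, zero_mul]

lemma emb_smul (ι : I ↪ J) (a : A) (X : Matrix (I → Fin N) (I → Fin N) A) :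
    emb ι (a • X) = a • emb (N := N) ι X := by
  ext v w
  simp only [emb, Matrix.of_apply, Matrix.smul_apply, smul_eq_mul, mul_assoc]

lemma emb_emb (ι : I ↪ J) (κ : K ↪ I) (X : Matrix (K → Fin N) (K → Fin N) A) :
    emb ι (emb κ X) = emb (N := N) (κ.trans ι) X := by
  ext v w
  simp only [emb, Matrix.of_apply, Function.Embedding.trans_apply]
  have harg : (v ∘ ι) ∘ κ = v ∘ (fun k => ι (κ k)) := rfl
  rw [mul_assoc]
  congr 1
  rw [ite_mul, one_mul, zero_mul, ← ite_and]
  apply if_congr _ rfl rfl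
  constructor
  · intro ⟨h1, h2⟩ j hj
    by_cases hji : ∃ i, ι i = j
    · obtain ⟨i, rfl⟩ := hji
      have hik : ∀ k, κ k ≠ i := fun k hk => hj k (by rw [hk])
      exact h1 i hik
    · exact h2 j (fun i hi => hji ⟨i, hi⟩)
  · intro h
    constructor
    · intro i hi
      exact h (ι i) (fun k hk => hi k (ι.injective hk))
    · intro j hj
      exact h j (fun k hk => hj (κ k) hk)

lemma cond_inl (v u : I ⊕ K → Fin N) :
    (∀ j, (∀ i, (Function.Embedding.inl (α := I) (β := K)) i ≠ j) → v j = u j) ↔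
      v ∘ Sum.inr = u ∘ Sum.inr := by
  constructor
  · intro h; funext k
    exact h (Sum.inr k) (fun i => by simp)
  · intro h j hj
    cases j with
    | inl i => exact absurd rfl (hj i)
    | inr k => exact congrFun h k

lemma cond_inr (v u : I ⊕ K → Fin N) :
    (∀ j, (∀ i, (Function.Embedding.inr (α := I) (β := K)) i ≠ j) → v j = u j) ↔
      v ∘ Sum.inl = u ∘ Sum.inl := by
  constructor
  · intro h; funext i
    exact h (Sum.inl i) (fun k => by simp)
  · intro h j hj
    cases j with
    | inl i => exact congrFun h i
    | inr k => exact absurd rfl (hj k)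

lemma emb_inl_mul_inr (X : Matrix (I → Fin N) (I → Fin N) A)
    (Y : Matrix (K → Fin N) (K → Fin N) A) :
    emb (.inl) X * emb (.inr) Y = Matrix.of (fun v w =>
      X (v ∘ Sum.inl) (w ∘ Sum.inl) * Y (v ∘ Sum.inr) (w ∘ Sum.inr)) := by
  ext v w
  rw [Matrix.mul_apply,
    ← Equiv.sum_comp (Equiv.sumArrowEquivProdArrow I K (Fin N)).symm
      (fun u => emb Function.Embedding.inl X v u * emb Function.Embedding.inr Y u w),
    Fintype.sum_prod_type]
  rw [Finset.sum_eq_single (w ∘ Sum.inl)]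
  · rw [Finset.sum_eq_single (v ∘ Sum.inr)]
    · simp only [emb, Matrix.of_apply]
      rw [if_pos ((cond_inl v ((Equiv.sumArrowEquivProdArrow I K (Fin N)).symm (w ∘ Sum.inl, v ∘ Sum.inr))).2 rfl),
        if_pos ((cond_inr ((Equiv.sumArrowEquivProdArrow I K (Fin N)).symm (w ∘ Sum.inl, v ∘ Sum.inr)) w).2 rfl), mul_one, mul_one]
      rfl
    · intro y _ hy
      simp only [emb, Matrix.of_apply]
      rw [if_neg (fun h => hy ((cond_inl v ((Equiv.sumArrowEquivProdArrow I K (Fin N)).symm (w ∘ Sum.inl, y))).1 h).symm), mul_zero, zero_mul]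
    · intro h; exact absurd (Finset.mem_univ _) h
  · intro x _ hx
    rw [Finset.sum_eq_zero]
    intro y _
    simp only [emb, Matrix.of_apply]
    rw [if_neg (fun h => hx ((cond_inr ((Equiv.sumArrowEquivProdArrow I K (Fin N)).symm (x, y)) w).1 h)), mul_zero, mul_zero]
  · intro h; exact absurd (Finset.mem_univ _) h

lemma emb_inr_mul_inl (X : Matrix (I → Fin N) (I → Fin N) A)
    (Y : Matrix (K → Fin N) (K → Fin N) A) :
    emb (.inr) Y * emb (.inl) X = Matrix.of (fun v w =>
      Y (v ∘ Sum.inr) (w ∘ Sum.inr) * X (v ∘ Sum.inl) (w ∘ Sum.inl)) := by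
  ext v w
  rw [Matrix.mul_apply,
    ← Equiv.sum_comp (Equiv.sumArrowEquivProdArrow I K (Fin N)).symm
      (fun u => emb Function.Embedding.inr Y v u * emb Function.Embedding.inl X u w),
    Fintype.sum_prod_type]
  rw [Finset.sum_eq_single (v ∘ Sum.inl)]
  · rw [Finset.sum_eq_single (w ∘ Sum.inr)]
    · simp only [emb, Matrix.of_apply]
      rw [if_pos ((cond_inr v ((Equiv.sumArrowEquivProdArrow I K (Fin N)).symm (v ∘ Sum.inl, w ∘ Sum.inr))).2 rfl),
        if_pos ((cond_inl ((Equiv.sumArrowEquivProdArrow I K (Fin N)).symm (v ∘ Sum.inl, w ∘ Sum.inr)) w).2 rfl), mul_one, mul_one]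
      rfl
    · intro y _ hy
      simp only [emb, Matrix.of_apply]
      rw [if_neg (fun h => hy ((cond_inl ((Equiv.sumArrowEquivProdArrow I K (Fin N)).symm (v ∘ Sum.inl, y)) w).1 h)), mul_zero, mul_zero]
    · intro h; exact absurd (Finset.mem_univ _) h
  · intro x _ hx
    rw [Finset.sum_eq_zero]
    intro y _
    simp only [emb, Matrix.of_apply]
    rw [if_neg (fun h => hx ((cond_inr v ((Equiv.sumArrowEquivProdArrow I K (Fin N)).symm (x, y))).1 h).symm), mul_zero, zero_mul]
  · intro h; exact absurd (Finset.mem_univ _) h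

lemma emb_inl_inr_comm (X : Matrix (I → Fin N) (I → Fin N) A)
    (Y : Matrix (K → Fin N) (K → Fin N) A)
    (hc : ∀ a b c d, Commute (X a b) (Y c d)) :
    emb (.inl) X * emb (.inr) Y = emb (.inr) Y * emb (N := N) (.inl) X := by
  rw [emb_inl_mul_inr, emb_inr_mul_inl]
  ext v w
  exact hc _ _ _ _

lemma emb_comm (ι : I ↪ J) (κ : K ↪ J) (hd : ∀ i k, ι i ≠ κ k)
    (X : Matrix (I → Fin N) (I → Fin N) A) (Y : Matrix (K → Fin N) (K → Fin N) A)
    (hc : ∀ a b c d, Commute (X a b) (Y c d)) :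
    emb ι X * emb κ Y = emb κ Y * emb (N := N) ι X := by
  have hinj : Function.Injective (Sum.elim ι κ : I ⊕ K → J) := by
    intro a b hab
    cases a with
    | inl i => cases b with
      | inl i' => simp only [Sum.elim_inl] at hab; rw [ι.injective hab]
      | inr k => exact absurd hab (hd i k)
    | inr k => cases b with
      | inl i => exact absurd hab.symm (hd i k)
      | inr k' => simp only [Sum.elim_inr] at hab; rw [κ.injective hab]
  let μ : I ⊕ K ↪ J := ⟨Sum.elim ι κ, hinj⟩
  have h1 : emb (N := N) ι X = emb μ (emb .inl X) := by
    rw [emb_emb]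
    have : (Function.Embedding.inl (α := I) (β := K)).trans μ = ι := by
      ext i; rfl
    rw [this]
  have h2 : emb (N := N) κ Y = emb μ (emb .inr Y) := by
    rw [emb_emb]
    have : (Function.Embedding.inr (α := I) (β := K)).trans μ = κ := by
      ext k; rfl
    rw [this]
  rw [h1, h2, emb_mul, emb_mul, emb_inl_inr_comm X Y hc]

end Emb
section Convert
variable {N : ℕ} {A : Type*} [Ring A] {B : Type*} [Ring B]

def addEmb (p m n : ℕ) (h : p + m ≤ n) : Fin m ↪ Fin n :=
  ⟨fun i => ⟨p + i, by omega⟩, fun a b hab => by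
    simp only [Fin.mk.injEq] at hab
    exact Fin.ext (by omega)⟩

@[simp] lemma addEmb_apply (p m n : ℕ) (h : p + m ≤ n) (i : Fin m) :
    addEmb p m n h i = ⟨p + i, by omega⟩ := rfl

lemma addEmb_trans (q l m p n : ℕ) (h1 : q + l ≤ m) (h2 : p + m ≤ n) :
    (addEmb q l m h1).trans (addEmb p m n h2) = addEmb (p + q) l n (by omega) := by
  ext i
  simp [addEmb, Function.Embedding.trans, Fin.ext_iff]
  show p + (q + (i : ℕ)) = p + q + i
  omega

def toM1 (X : Matrix (Fin N) (Fin N) A) :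
    Matrix (Fin 1 → Fin N) (Fin 1 → Fin N) A :=
  X.submatrix (fun v => v 0) (fun v => v 0)

def toM2 (X : Matrix (Fin N × Fin N) (Fin N × Fin N) A) :
    Matrix (Fin 2 → Fin N) (Fin 2 → Fin N) A :=
  X.submatrix (fun v => (v 0, v 1)) (fun v => (v 0, v 1))

def toM3 (X : Matrix (Fin N × Fin N × Fin N) (Fin N × Fin N × Fin N) A) :
    Matrix (Fin 3 → Fin N) (Fin 3 → Fin N) A :=
  X.submatrix (fun v => (v 0, v 1, v 2)) (fun v => (v 0, v 1, v 2))

def eqv1 : (Fin 1 → Fin N) ≃ Fin N where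
  toFun v := v 0
  invFun x := fun _ => x
  left_inv v := by funext j; fin_cases j <;> rfl
  right_inv x := rfl

def eqv2 : (Fin 2 → Fin N) ≃ Fin N × Fin N where
  toFun v := (v 0, v 1)
  invFun x := ![x.1, x.2]
  left_inv v := by funext j; fin_cases j <;> rfl
  right_inv x := by rcases x with ⟨a, b⟩; simp

def eqv3 : (Fin 3 → Fin N) ≃ Fin N × Fin N × Fin N where
  toFun v := (v 0, v 1, v 2)
  invFun x := ![x.1, x.2.1, x.2.2]
  left_inv v := by funext j; fin_cases j <;> rfl
  right_inv x := by rcases x with ⟨a, b, c⟩; simp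

lemma toM1_mul (X Y : Matrix (Fin N) (Fin N) A) :
    toM1 X * toM1 Y = toM1 (X * Y) :=
  Matrix.submatrix_mul_equiv X Y _ (eqv1 (N := N)) _

lemma toM2_mul (X Y : Matrix (Fin N × Fin N) (Fin N × Fin N) A) :
    toM2 X * toM2 Y = toM2 (X * Y) :=
  Matrix.submatrix_mul_equiv X Y _ (eqv2 (N := N)) _

lemma toM3_mul (X Y : Matrix (Fin N × Fin N × Fin N) (Fin N × Fin N × Fin N) A) :
    toM3 X * toM3 Y = toM3 (X * Y) :=
  Matrix.submatrix_mul_equiv X Y _ (eqv3 (N := N)) _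

lemma toM2_one : toM2 (1 : Matrix (Fin N × Fin N) (Fin N × Fin N) A) = 1 :=
  Matrix.submatrix_one_equiv (eqv2 (N := N))

lemma toM2_smul (a : A) (X : Matrix (Fin N × Fin N) (Fin N × Fin N) A) :
    toM2 (a • X) = a • toM2 X := rfl

lemma toM2_map (φ : A →+* B) (X : Matrix (Fin N × Fin N) (Fin N × Fin N) A) :
    (toM2 X).map φ = toM2 (X.map φ) := rfl

lemma emb_map {I J : Type*} [Fintype I] [Fintype J] [DecidableEq I] [DecidableEq J]
    (ι : I ↪ J) (φ : A →+* B) (X : Matrix (I → Fin N) (I → Fin N) A) :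
    (emb ι X).map φ = emb (N := N) ι (X.map φ) := by
  ext v w
  simp only [emb, Matrix.map_apply, Matrix.of_apply, _root_.map_mul]
  congr 1
  split <;> simp

end Convert

section Bridges
variable {N : ℕ} {A : Type} [Ring A]

lemma ite_congr01 {α : Type*} [One α] [Zero α] {c1 c2 : Prop} {d1 : Decidable c1}
    {d2 : Decidable c2} (h : c1 ↔ c2) :
    (@ite _ c1 d1 (1 : α) 0) = @ite _ c2 d2 (1 : α) 0 := by
  by_cases hc : c1
  · rw [if_pos hc, if_pos (h.1 hc)]
  · rw [if_neg hc, if_neg (fun hh => hc (h.2 hh))]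

lemma lift2_emb (n p : ℕ) (h : p + 2 ≤ n) (X : Matrix (Fin N × Fin N) (Fin N × Fin N) A) :
    lift2 n X p = emb (addEmb p 2 n h) (toM2 X) := by
  ext v w
  have hlt : p + 1 < n := by omega
  have e0 : addEmb p 2 n h 0 = (⟨p, by omega⟩ : Fin n) := by simp [Fin.ext_iff]
  have e1 : addEmb p 2 n h 1 = (⟨p + 1, by omega⟩ : Fin n) := by simp [Fin.ext_iff]
  have hcond : (∀ j : Fin n, (j : ℕ) ≠ p → (j : ℕ) ≠ p + 1 → v j = w j) ↔
      (∀ j, (∀ i : Fin 2, addEmb p 2 n h i ≠ j) → v j = w j) := by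
    constructor
    · intro H j hj
      refine H j ?_ ?_
      · intro hh; exact hj 0 (by rw [e0]; exact Fin.ext hh.symm)
      · intro hh; exact hj 1 (by rw [e1]; exact Fin.ext hh.symm)
    · intro H j h1 h2
      refine H j ?_
      intro i hc
      have hv := Fin.ext_iff.1 hc
      simp only [addEmb_apply] at hv
      have := i.isLt
      omega
  simp only [lift2, emb, toM2, Matrix.of_apply, Matrix.submatrix_apply, dif_pos hlt,
    Function.comp_apply, e0, e1]
  congr 1
  exact ite_congr01 hcond

lemma liftV_emb (n p : ℕ) (h : p + 1 ≤ n) (X : Matrix (Fin N) (Fin N) A) :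
    liftV n X p = emb (addEmb p 1 n h) (toM1 X) := by
  ext v w
  have hlt : p < n := by omega
  have e0 : addEmb p 1 n h 0 = (⟨p, by omega⟩ : Fin n) := by simp [Fin.ext_iff]
  have hcond : (∀ j : Fin n, (j : ℕ) ≠ p → v j = w j) ↔
      (∀ j, (∀ i : Fin 1, addEmb p 1 n h i ≠ j) → v j = w j) := by
    constructor
    · intro H j hj
      refine H j ?_
      intro hh; exact hj 0 (by rw [e0]; exact Fin.ext hh.symm)
    · intro H j h1
      refine H j ?_
      intro i hc
      have hv := Fin.ext_iff.1 hc
      simp only [addEmb_apply] at hv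
      have := i.isLt
      omega
  simp only [liftV, emb, toM1, Matrix.of_apply, Matrix.submatrix_apply, dif_pos hlt,
    Function.comp_apply, e0]
  congr 1
  exact ite_congr01 hcond

lemma toM2_lift1 (L : Matrix (Fin N) (Fin N) A) :
    toM2 (lift1 L) = emb (addEmb 0 1 2 (by omega)) (toM1 L) := by
  ext v w
  have e0 : addEmb 0 1 2 (by omega) (0 : Fin 1) = (0 : Fin 2) := by simp [Fin.ext_iff]
  have hcond : (v 1 = w 1) ↔
      (∀ j : Fin 2, (∀ i : Fin 1, addEmb 0 1 2 (by omega) i ≠ j) → v j = w j) := by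
    constructor
    · intro H j hj
      fin_cases j
      · exact absurd e0 (hj 0)
      · exact H
    · intro H
      refine H 1 ?_
      intro i; fin_cases i; simp [Fin.ext_iff]
  simp only [lift1, toM2, emb, toM1, Matrix.of_apply, Matrix.submatrix_apply,
    Function.comp_apply, e0]
  congr 1
  exact ite_congr01 hcond

lemma toM3_up12 (X : Matrix (Fin N × Fin N) (Fin N × Fin N) ℂ) :
    toM3 (up12 X) = emb (addEmb 0 2 3 (by omega)) (toM2 X) := by
  ext v w
  have e0 : addEmb 0 2 3 (by omega) (0 : Fin 2) = (0 : Fin 3) := by simp [Fin.ext_iff]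
  have e1 : addEmb 0 2 3 (by omega) (1 : Fin 2) = (1 : Fin 3) := by simp [Fin.ext_iff]
  have hcond : (v 2 = w 2) ↔
      (∀ j : Fin 3, (∀ i : Fin 2, addEmb 0 2 3 (by omega) i ≠ j) → v j = w j) := by
    constructor
    · intro H j hj
      fin_cases j
      · exact absurd e0 (hj 0)
      · exact absurd e1 (hj 1)
      · exact H
    · intro H
      refine H 2 ?_
      intro i; fin_cases i
      · simp [Fin.ext_iff]
      · simp [Fin.ext_iff]
  simp only [up12, toM3, toM2, emb, Matrix.of_apply, Matrix.submatrix_apply,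
    Function.comp_apply, e0, e1]
  congr 1
  exact ite_congr01 hcond

lemma toM3_up23 (X : Matrix (Fin N × Fin N) (Fin N × Fin N) ℂ) :
    toM3 (up23 X) = emb (addEmb 1 2 3 (by omega)) (toM2 X) := by
  ext v w
  have e0 : addEmb 1 2 3 (by omega) (0 : Fin 2) = (1 : Fin 3) := by simp [Fin.ext_iff]
  have e1 : addEmb 1 2 3 (by omega) (1 : Fin 2) = (2 : Fin 3) := by simp [Fin.ext_iff]
  have hcond : (v 0 = w 0) ↔
      (∀ j : Fin 3, (∀ i : Fin 2, addEmb 1 2 3 (by omega) i ≠ j) → v j = w j) := by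
    constructor
    · intro H j hj
      fin_cases j
      · exact H
      · exact absurd e0 (hj 0)
      · exact absurd e1 (hj 1)
    · intro H
      refine H 0 ?_
      intro i; fin_cases i
      · simp [Fin.ext_iff]
      · simp [Fin.ext_iff]
  simp only [up23, toM3, toM2, emb, Matrix.of_apply, Matrix.submatrix_apply,
    Function.comp_apply, e0, e1]
  rw [mul_comm]
  congr 1
  exact ite_congr01 hcond

end Bridges

section Ops
variable {N : ℕ} {A : Type} [Ring A] {B : Type} [Ring B]

lemma lift2_mul (n p : ℕ) (h : p + 2 ≤ n) (X Y : Matrix (Fin N × Fin N) (Fin N × Fin N) A) :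
    lift2 n X p * lift2 n Y p = lift2 n (X * Y) p := by
  rw [lift2_emb n p h X, lift2_emb n p h Y, lift2_emb n p h (X * Y), emb_mul, toM2_mul]

lemma lift2_one (n p : ℕ) (h : p + 2 ≤ n) :
    lift2 n (1 : Matrix (Fin N × Fin N) (Fin N × Fin N) A) p = 1 := by
  rw [lift2_emb n p h, toM2_one, emb_one]

lemma lift2_map (n p : ℕ) (h : p + 2 ≤ n) (φ : A →+* B)
    (X : Matrix (Fin N × Fin N) (Fin N × Fin N) A) :
    (lift2 n X p).map φ = lift2 n (X.map φ) p := by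
  rw [lift2_emb n p h X, lift2_emb n p h (X.map ⇑φ), emb_map, toM2_map]

lemma lift_rel3 (n p : ℕ) (h : p + 3 ≤ n)
    (X Y Z X' Y' Z' : Matrix (Fin N × Fin N) (Fin N × Fin N) ℂ)
    (hrel : up12 X * up23 Y * up12 Z = up23 X' * up12 Y' * up23 Z') :
    lift2 n X p * lift2 n Y (p + 1) * lift2 n Z p
      = lift2 n X' (p + 1) * lift2 n Y' p * lift2 n Z' (p + 1) := by
  have h2 : p + 2 ≤ n := by omega
  have h2' : (p + 1) + 2 ≤ n := by omega
  have e12 : ∀ W : Matrix (Fin N × Fin N) (Fin N × Fin N) ℂ,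
      lift2 n W p = emb (addEmb p 3 n h) (toM3 (up12 W)) := by
    intro W
    rw [toM3_up12, emb_emb, addEmb_trans, lift2_emb n p h2 W]
    rfl
  have e23 : ∀ W : Matrix (Fin N × Fin N) (Fin N × Fin N) ℂ,
      lift2 n W (p + 1) = emb (addEmb p 3 n h) (toM3 (up23 W)) := by
    intro W
    rw [toM3_up23, emb_emb, addEmb_trans, lift2_emb n (p + 1) h2' W]
  rw [e12 X, e23 Y, e12 Z, e23 X', e12 Y', e23 Z', emb_mul, emb_mul, emb_mul, emb_mul,
    toM3_mul, toM3_mul, toM3_mul, toM3_mul, hrel]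

lemma lift2_central_comm (n p q : ℕ) (hpq : p + 2 ≤ q) (hq : q + 2 ≤ n)
    (Z : Matrix (Fin N × Fin N) (Fin N × Fin N) A)
    (hZ : ∀ a b x, Commute (Z a b) x)
    (Y : Matrix (Fin N × Fin N) (Fin N × Fin N) A) :
    lift2 n Z q * lift2 n Y p = lift2 n Y p * lift2 n Z q := by
  rw [lift2_emb n q hq Z, lift2_emb n p (by omega) Y]
  apply emb_comm
  · intro i k
    simp only [addEmb_apply, ne_eq, Fin.mk.injEq]
    have := i.isLt; have := k.isLt; omega
  · intro a b c d
    exact hZ _ _ _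

lemma lift2_liftV_comm (n q : ℕ) (h0 : 1 ≤ q) (hq : q + 2 ≤ n)
    (Z : Matrix (Fin N × Fin N) (Fin N × Fin N) A)
    (hZ : ∀ a b x, Commute (Z a b) x)
    (L : Matrix (Fin N) (Fin N) A) :
    lift2 n Z q * liftV n L 0 = liftV n L 0 * lift2 n Z q := by
  rw [lift2_emb n q hq Z, liftV_emb n 0 (by omega) L]
  apply emb_comm
  · intro i k
    simp only [addEmb_apply, ne_eq, Fin.mk.injEq]
    have := i.isLt; have := k.isLt; omega
  · intro a b c d
    exact hZ _ _ _

lemma copies_comm (n q : ℕ) (FA FinvA : Matrix (Fin N × Fin N) (Fin N × Fin N) A)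
    (Z : Matrix (Fin N × Fin N) (Fin N × Fin N) A)
    (hZ : ∀ a b x, Commute (Z a b) x)
    (X : Matrix (Fin N) (Fin N) A) :
    ∀ p, p + 1 ≤ q → q + 2 ≤ n →
      lift2 n Z q * copies n FA FinvA X p = copies n FA FinvA X p * lift2 n Z q
  | 0, hp, hq => by
      simp only [copies]
      exact lift2_liftV_comm n q (by omega) hq Z hZ X
  | p + 1, hp, hq => by
      have ih := copies_comm n q FA FinvA Z hZ X p (by omega) hq
      have c1 := lift2_central_comm n p q (by omega) hq Z hZ FA
      have c2 := lift2_central_comm n p q (by omega) hq Z hZ FinvA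
      simp only [copies]
      calc lift2 n Z q * (lift2 n FA p * copies n FA FinvA X p * lift2 n FinvA p)
          = lift2 n Z q * lift2 n FA p * copies n FA FinvA X p * lift2 n FinvA p := by
            simp only [mul_assoc]
        _ = lift2 n FA p * lift2 n Z q * copies n FA FinvA X p * lift2 n FinvA p := by
            rw [c1]
        _ = lift2 n FA p * (lift2 n Z q * copies n FA FinvA X p) * lift2 n FinvA p := by
            simp only [mul_assoc]
        _ = lift2 n FA p * (copies n FA FinvA X p * lift2 n Z q) * lift2 n FinvA p := by
            rw [ih]
        _ = lift2 n FA p * copies n FA FinvA X p * (lift2 n Z q * lift2 n FinvA p) := by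
            simp only [mul_assoc]
        _ = lift2 n FA p * copies n FA FinvA X p * (lift2 n FinvA p * lift2 n Z q) := by
            rw [c2]
        _ = lift2 n FA p * copies n FA FinvA X p * lift2 n FinvA p * lift2 n Z q := by
            simp only [mul_assoc]

end Ops

section Step

lemma step_abstract {S : Type*} [Ring S] [Algebra ℂ S] (η : ℂ)
    (f finv g ginv r r' l m : S)
    (hf1 : f * finv = 1) (hf2 : finv * f = 1)
    (hg1 : g * ginv = 1) (hg2 : ginv * g = 1)
    (hYB : f * g * f = g * f * g)
    (hcmp : f * g * r = r' * (f * g))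
    (hgl : g * l = l * g) (hgm : g * m = m * g)
    (hIH : r * l * r * m = η • (m * (f * l * finv))) :
    r' * (f * l * finv) * r' * (f * m * finv)
      = η • (f * m * finv * (g * (f * l * finv) * ginv)) := by
  have cf : ∀ x : S, f * (finv * x) = x := fun x => by rw [← mul_assoc, hf1, one_mul]
  have cf' : ∀ x : S, finv * (f * x) = x := fun x => by rw [← mul_assoc, hf2, one_mul]
  have cg : ∀ x : S, g * (ginv * x) = x := fun x => by rw [← mul_assoc, hg1, one_mul]
  have cg' : ∀ x : S, ginv * (g * x) = x := fun x => by rw [← mul_assoc, hg2, one_mul]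
  have hfc : ∀ x y : S, f * x = f * y → x = y := fun x y hxy => by
    have h := congrArg (fun z => finv * z) hxy
    simpa only [cf'] using h
  have hgc : ∀ x y : S, g * x = g * y → x = y := fun x y hxy => by
    have h := congrArg (fun z => ginv * z) hxy
    simpa only [cg'] using h
  have hgil : ginv * l = l * ginv := by
    have h := congrArg (fun z => ginv * (z * ginv)) hgl
    simp only [mul_assoc] at h
    rw [cg'] at h
    rw [hg1, mul_one] at h
    exact h.symm
  have hgim : ginv * m = m * ginv := by
    have h := congrArg (fun z => ginv * (z * ginv)) hgm
    simp only [mul_assoc] at h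
    rw [cg'] at h
    rw [hg1, mul_one] at h
    exact h.symm
  have hgl' : ∀ x : S, g * (l * x) = l * (g * x) := fun x => by
    rw [← mul_assoc, hgl, mul_assoc]
  have hgm' : ∀ x : S, g * (m * x) = m * (g * x) := fun x => by
    rw [← mul_assoc, hgm, mul_assoc]
  have hgil' : ∀ x : S, ginv * (l * x) = l * (ginv * x) := fun x => by
    rw [← mul_assoc, hgil, mul_assoc]
  have hgim' : ∀ x : S, ginv * (m * x) = m * (ginv * x) := fun x => by
    rw [← mul_assoc, hgim, mul_assoc]
  have hYB' : ∀ x : S, f * (g * (f * x)) = g * (f * (g * x)) := fun x => by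
    have h := congrArg (fun z => z * x) hYB
    simpa only [mul_assoc] using h
  have hIH' : ∀ x : S, r * (l * (r * (m * x))) = η • (m * (f * (l * (finv * x)))) := fun x => by
    have h := congrArg (fun z => z * x) hIH
    simpa only [mul_assoc, smul_mul_assoc] using h
  have hYBi : finv * (ginv * finv) = ginv * (finv * ginv) := by
    apply hfc; apply hgc; apply hfc
    calc f * (g * (f * (finv * (ginv * finv))))
        = 1 := by rw [cf, cg, hf1]
      _ = f * (g * (f * (ginv * (finv * ginv)))) := by
          rw [hYB', cg, cf, hg1]
  have hr' : r' = f * (g * (r * (ginv * finv))) := by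
    have h := congrArg (fun z => z * (ginv * finv)) hcmp
    simp only [mul_assoc, cg, hf1, mul_one] at h
    exact h.symm
  rw [hr']
  simp only [mul_assoc]
  simp only [cf']
  simp only [hgil']
  simp only [cg']
  simp only [hgim']
  simp only [hIH']
  simp only [mul_smul_comm]
  congr 1
  simp only [hgm']
  congr 1
  congr 1
  -- goal: g * (f * (l * (finv * (ginv * finv)))) = finv * (g * (f * (l * (finv * ginv))))
  apply hfc
  rw [cf]
  rw [hYB']
  simp only [hgl']
  rw [show g * (finv * (ginv * finv)) = g * (ginv * (finv * ginv)) from by rw [hYBi], cg]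

end Step


/-- If `R₁L₁R₁M₁ = η·M₁L_{2̄}` with copies defined via `F`, then for every
`k ≥ 1` the shifted relation `R_k L_{k̄} R_k M_{k̄} = η·M_{k̄} L_{k+1‾}`
holds in `Mat_{N^{k+1}}(A)`. -/
theorem ofp_shifted (N : ℕ) (hN : 1 ≤ N)
    (R Rinv F Finv : Matrix (Fin N × Fin N) (Fin N × Fin N) ℂ)
    (hYBR : up12 R * up23 R * up12 R = up23 R * up12 R * up23 R)
    (hYBF : up12 F * up23 F * up12 F = up23 F * up12 F * up23 F)
    (hRinv : R * Rinv = 1 ∧ Rinv * R = 1)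
    (hFinv : F * Finv = 1 ∧ Finv * F = 1)
    (hcomp : up12 R * up23 F * up12 F = up23 F * up12 F * up23 R
      ∧ up12 F * up23 F * up12 R = up23 R * up12 F * up23 F)
    (A : Type) [Ring A] [Algebra ℂ A] (η : ℂ) (hη : η ≠ 0)
    (L M : Matrix (Fin N) (Fin N) A)
    (hOFP : R.map (algebraMap ℂ A) * lift1 L * R.map (algebraMap ℂ A) * lift1 M
        = algebraMap ℂ A η
            • (lift1 M * (F.map (algebraMap ℂ A) * lift1 L * Finv.map (algebraMap ℂ A)))) :
    ∀ k : ℕ, 1 ≤ k →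
      lift2 (k + 1) (R.map (algebraMap ℂ A)) (k - 1)
          * copies (k + 1) (F.map (algebraMap ℂ A)) (Finv.map (algebraMap ℂ A)) L (k - 1)
          * lift2 (k + 1) (R.map (algebraMap ℂ A)) (k - 1)
          * copies (k + 1) (F.map (algebraMap ℂ A)) (Finv.map (algebraMap ℂ A)) M (k - 1)
        = algebraMap ℂ A η
            • (copies (k + 1) (F.map (algebraMap ℂ A)) (Finv.map (algebraMap ℂ A)) M (k - 1)
              * copies (k + 1) (F.map (algebraMap ℂ A)) (Finv.map (algebraMap ℂ A)) L k) := by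
  intro k hk
  have hFF1 : F.map (algebraMap ℂ A) * Finv.map (algebraMap ℂ A) = 1 := by
    rw [← Matrix.map_mul, hFinv.1]
    exact Matrix.map_one _ (map_zero _) (map_one _)
  have hFF2 : Finv.map (algebraMap ℂ A) * F.map (algebraMap ℂ A) = 1 := by
    rw [← Matrix.map_mul, hFinv.2]
    exact Matrix.map_one _ (map_zero _) (map_one _)
  have hcF : ∀ (a b : Fin N × Fin N) (x : A),
      Commute ((F.map (algebraMap ℂ A)) a b) x := by
    intro a b x
    rw [Matrix.map_apply]
    exact Algebra.commutes _ _
  have key : ∀ p, p + 2 ≤ k + 1 →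
      lift2 (k + 1) (R.map (algebraMap ℂ A)) p
          * copies (k + 1) (F.map (algebraMap ℂ A)) (Finv.map (algebraMap ℂ A)) L p
          * lift2 (k + 1) (R.map (algebraMap ℂ A)) p
          * copies (k + 1) (F.map (algebraMap ℂ A)) (Finv.map (algebraMap ℂ A)) M p
        = η • (copies (k + 1) (F.map (algebraMap ℂ A)) (Finv.map (algebraMap ℂ A)) M p
              * copies (k + 1) (F.map (algebraMap ℂ A)) (Finv.map (algebraMap ℂ A)) L (p + 1)) := by
    intro p
    induction p with
    | zero =>
      intro _
      have h2n : 0 + 2 ≤ k + 1 := by omega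
      have hembV : ∀ L' : Matrix (Fin N) (Fin N) A,
          emb (addEmb 0 2 (k + 1) h2n) (toM2 (lift1 L')) = liftV (k + 1) L' 0 := by
        intro L'
        rw [toM2_lift1, emb_emb, addEmb_trans, liftV_emb (k + 1) 0 (by omega) L']
      have hbase := congrArg (fun X => emb (addEmb 0 2 (k + 1) h2n) (toM2 X)) hOFP
      simp only [← toM2_mul, ← emb_mul, toM2_smul, emb_smul] at hbase
      simp only [hembV] at hbase
      simp only [← lift2_emb (k + 1) 0 h2n] at hbase
      rw [algebraMap_smul] at hbase
      simp only [copies]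
      exact hbase
    | succ p ih =>
      intro hp
      have hIH := ih (by omega)
      simp only [copies] at hIH
      have h3 : p + 3 ≤ k + 1 := by omega
      have hb1 : p + 2 ≤ k + 1 := by omega
      have hb2 : (p + 1) + 2 ≤ k + 1 := by omega
      have hf1 : lift2 (k + 1) (F.map (algebraMap ℂ A)) p
          * lift2 (k + 1) (Finv.map (algebraMap ℂ A)) p = 1 := by
        rw [lift2_mul _ p hb1, hFF1, lift2_one _ p hb1]
      have hf2 : lift2 (k + 1) (Finv.map (algebraMap ℂ A)) p
          * lift2 (k + 1) (F.map (algebraMap ℂ A)) p = 1 := by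
        rw [lift2_mul _ p hb1, hFF2, lift2_one _ p hb1]
      have hg1 : lift2 (k + 1) (F.map (algebraMap ℂ A)) (p + 1)
          * lift2 (k + 1) (Finv.map (algebraMap ℂ A)) (p + 1) = 1 := by
        rw [lift2_mul _ (p + 1) hb2, hFF1, lift2_one _ (p + 1) hb2]
      have hg2 : lift2 (k + 1) (Finv.map (algebraMap ℂ A)) (p + 1)
          * lift2 (k + 1) (F.map (algebraMap ℂ A)) (p + 1) = 1 := by
        rw [lift2_mul _ (p + 1) hb2, hFF2, lift2_one _ (p + 1) hb2]
      have hYBC := lift_rel3 (k + 1) p h3 F F F F F F hYBF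
      have hYBl := congrArg (fun X => X.map (algebraMap ℂ A)) hYBC
      simp only [Matrix.map_mul, lift2_map (k + 1) p hb1 (algebraMap ℂ A),
        lift2_map (k + 1) (p + 1) hb2 (algebraMap ℂ A)] at hYBl
      have hcmpC := lift_rel3 (k + 1) p h3 F F R R F F hcomp.2
      have hcmpl := congrArg (fun X => X.map (algebraMap ℂ A)) hcmpC
      simp only [Matrix.map_mul, lift2_map (k + 1) p hb1 (algebraMap ℂ A),
        lift2_map (k + 1) (p + 1) hb2 (algebraMap ℂ A)] at hcmpl
      have hcmp' := hcmpl.trans (mul_assoc _ _ _)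
      have hgl := copies_comm (k + 1) (p + 1) (F.map (algebraMap ℂ A))
        (Finv.map (algebraMap ℂ A)) (F.map (algebraMap ℂ A)) hcF L p (le_refl (p + 1)) hb2
      have hgm := copies_comm (k + 1) (p + 1) (F.map (algebraMap ℂ A))
        (Finv.map (algebraMap ℂ A)) (F.map (algebraMap ℂ A)) hcF M p (le_refl (p + 1)) hb2
      simp only [copies]
      exact step_abstract η _ _ _ _ _ _ _ _ hf1 hf2 hg1 hg2 hYBl hcmp' hgl hgm hIH
  obtain ⟨j, rfl⟩ : ∃ j, k = j + 1 := ⟨k - 1, by omega⟩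
  rw [algebraMap_smul]
  exact key j (by omega)
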